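/- Let π ∈ S_n be a Schröder permutation and let σ ∈ S_n be a 132-avoiding permutation with E(σ) = E*(π). Then for any k ≥ 1, π avoids the increasing pattern 12⋯k if and only if σ avoids 12⋯k. -/

import Mathlib

/-- `π` contains the pattern `τ`: there is a strictly increasing choice of positions
whose values appear in the same relative order as `τ`. -/
def Contains {n k : ℕ} (π : Equiv.Perm (Fin n)) (τ : Equiv.Perm (Fin k)) : Prop :=
  ∃ f : Fin k → Fin n, StrictMono f ∧ ∀ a b : Fin k, τ a < τ b ↔ π (f a) < π (f b)

/-- `π` avoids the pattern `τ`. -/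
def Avoids {n k : ℕ} (π : Equiv.Perm (Fin n)) (τ : Equiv.Perm (Fin k)) : Prop :=
  ¬ Contains π τ

/-- The pattern 1243 (in one-line notation), as a permutation of `Fin 4` (0-based). -/
def pat1243 : Equiv.Perm (Fin 4) := Equiv.swap 2 3

/-- The pattern 2143 (in one-line notation), as a permutation of `Fin 4` (0-based). -/
def pat2143 : Equiv.Perm (Fin 4) := Equiv.swap 0 1 * Equiv.swap 2 3

/-- A Schröder permutation avoids both 1243 and 2143. -/
def Schroeder {n : ℕ} (π : Equiv.Perm (Fin n)) : Prop :=
  Avoids π pat1243 ∧ Avoids π pat2143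

/-- The diagram of `π` (0-based coordinates): squares `(i,j)` with `π i > j` and
`π⁻¹ j > i`. -/
def Diagram {n : ℕ} (π : Equiv.Perm (Fin n)) : Set (Fin n × Fin n) :=
  {p | p.2 < π p.1 ∧ p.1 < π.symm p.2}

/-- The essential set of `π`: squares of the diagram whose east and south neighbours
are not in the diagram. -/
def EssSet {n : ℕ} (π : Equiv.Perm (Fin n)) : Set (Fin n × Fin n) :=
  {p | p ∈ Diagram π ∧
    (∀ i' : Fin n, (i' : ℕ) = (p.1 : ℕ) + 1 → (i', p.2) ∉ Diagram π) ∧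
    (∀ j' : Fin n, (j' : ℕ) = (p.2 : ℕ) + 1 → (p.1, j') ∉ Diagram π)}

/-- The rank of a square `(i,j)`: the number of positions `k < i` with `π k < j`. -/
def rank {n : ℕ} (π : Equiv.Perm (Fin n)) (p : Fin n × Fin n) : ℕ :=
  (Finset.univ.filter fun k : Fin n => k < p.1 ∧ π k < p.2).card

/-- The pattern 132, as a permutation of `Fin 3` (0-based one-line notation `0 2 1`). -/
def pat132 : Equiv.Perm (Fin 3) := Equiv.swap 1 2

/-- `E*(π)`: the set obtained from the essential set of `π` by keeping the rank-0 elements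
and replacing every rank-1 element `(i,j)` by `(i-1, j-1)`. -/
def Estar {n : ℕ} (π : Equiv.Perm (Fin n)) : Set (Fin n × Fin n) :=
  {p | p ∈ EssSet π ∧ rank π p = 0} ∪
  {q | ∃ p, p ∈ EssSet π ∧ rank π p = 1 ∧
        (q.1 : ℕ) + 1 = (p.1 : ℕ) ∧ (q.2 : ℕ) + 1 = (p.2 : ℕ)}

namespace SP
variable {n : ℕ}


lemma sm4 {α : Type*} [Preorder α] {p q i l : α} (h1 : p < q) (h2 : q < i) (h3 : i < l) :
    StrictMono ![p, q, i, l] := by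
  intro x y hxy
  fin_cases x <;> fin_cases y <;>
    simp only [Matrix.cons_val_zero, Matrix.cons_val_one, Matrix.head_cons,
      Matrix.cons_val_two, Matrix.tail_cons, Matrix.cons_val_three, Matrix.head_fin_const] <;>
    first | exact absurd hxy (by decide) | assumption | exact h1.trans h2
          | exact h2.trans h3 | exact (h1.trans h2).trans h3

lemma sm3 {α : Type*} [Preorder α] {p q i : α} (h1 : p < q) (h2 : q < i) :
    StrictMono ![p, q, i] := by
  intro x y hxy
  fin_cases x <;> fin_cases y <;>
    simp only [Matrix.cons_val_zero, Matrix.cons_val_one, Matrix.head_cons,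
      Matrix.cons_val_two, Matrix.tail_cons, Matrix.cons_val_three, Matrix.head_fin_const] <;>
    first | exact absurd hxy (by decide) | assumption | exact h1.trans h2

def NoBad (π : Equiv.Perm (Fin n)) : Prop :=
  ∀ p q i l : Fin n, p < q → q < i → i < l →
    π p < π l → π q < π l → π l < π i → False

def NoBad1 (π : Equiv.Perm (Fin n)) : Prop :=
  ∀ s i l : Fin n, s < i → i < l → π s < π l → π l < π i → False

lemma noBad_of_schroeder {π : Equiv.Perm (Fin n)} (h : Schroeder π) : NoBad π := by
  intro p q i l hpq hqi hil h1 h2 h3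
  have hvpq : π p ≠ π q := fun hc => (ne_of_lt hpq) (π.injective hc)
  rcases lt_or_gt_of_ne hvpq with hc | hc
  · apply h.1
    refine ⟨![p, q, i, l], sm4 hpq hqi hil, ?_⟩
    have f4 : π p < π l := h1
    have f5 : π p < π i := h1.trans h3
    have f6 : π q < π i := h2.trans h3
    intro a b
    fin_cases a <;> fin_cases b <;>
      simp only [Matrix.cons_val_zero, Matrix.cons_val_one, Matrix.head_cons,
        Matrix.cons_val_two, Matrix.tail_cons, Matrix.cons_val_three, Matrix.head_fin_const] <;>
      first
        | exact iff_of_true (by decide)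
            (by first | exact hc | exact h1 | exact h2 | exact h3 | exact f4 | exact f5 | exact f6)
        | exact iff_of_false (by decide)
            (by first | exact lt_irrefl _ | exact asymm hc | exact asymm h1 | exact asymm h2
                      | exact asymm h3 | exact asymm f4 | exact asymm f5 | exact asymm f6)
  · apply h.2
    refine ⟨![p, q, i, l], sm4 hpq hqi hil, ?_⟩
    have f4 : π q < π l := h2
    have f5 : π p < π i := h1.trans h3
    have f6 : π q < π i := h2.trans h3
    intro a b
    fin_cases a <;> fin_cases b <;>
      simp only [Matrix.cons_val_zero, Matrix.cons_val_one, Matrix.head_cons,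
        Matrix.cons_val_two, Matrix.tail_cons, Matrix.cons_val_three, Matrix.head_fin_const] <;>
      first
        | exact iff_of_true (by decide)
            (by first | exact hc | exact h1 | exact h2 | exact h3 | exact f4 | exact f5 | exact f6)
        | exact iff_of_false (by decide)
            (by first | exact lt_irrefl _ | exact asymm hc | exact asymm h1 | exact asymm h2
                      | exact asymm h3 | exact asymm f4 | exact asymm f5 | exact asymm f6)

lemma noBad1_of_avoid132 {π : Equiv.Perm (Fin n)} (h : Avoids π pat132) : NoBad1 π := by
  intro s i l hsi hil h1 h2
  apply h
  refine ⟨![s, i, l], sm3 hsi hil, ?_⟩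
  have f3 : π s < π i := h1.trans h2
  intro a b
  fin_cases a <;> fin_cases b <;>
    simp only [Matrix.cons_val_zero, Matrix.cons_val_one, Matrix.head_cons,
      Matrix.cons_val_two, Matrix.tail_cons, Matrix.cons_val_three, Matrix.head_fin_const] <;>
    first
      | exact iff_of_true (by decide) (by first | exact h1 | exact h2 | exact f3)
      | exact iff_of_false (by decide)
          (by first | exact lt_irrefl _ | exact asymm h1 | exact asymm h2 | exact asymm f3)

lemma schroeder_of_avoid132 {π : Equiv.Perm (Fin n)} (h : Avoids π pat132) : Schroeder π := by
  have key : NoBad1 π := noBad1_of_avoid132 h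
  constructor
  · rintro ⟨f, hf, hp⟩
    exact key (f 1) (f 2) (f 3) (hf (by decide)) (hf (by decide))
      ((hp 1 3).1 (by decide)) ((hp 3 2).1 (by decide))
  · rintro ⟨f, hf, hp⟩
    exact key (f 1) (f 2) (f 3) (hf (by decide)) (hf (by decide))
      ((hp 1 3).1 (by decide)) ((hp 3 2).1 (by decide))

def IncrSeq (π : Equiv.Perm (Fin n)) (S : Finset (Fin n)) : Prop :=
  ∀ i ∈ S, ∀ j ∈ S, i < j → π i < π j

lemma incrSeq_subset {π : Equiv.Perm (Fin n)} {S T : Finset (Fin n)} (h : T ⊆ S)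
    (hS : IncrSeq π S) : IncrSeq π T := fun i hi j hj hij => hS i (h hi) j (h hj) hij

lemma contains_one_iff {k : ℕ} (π : Equiv.Perm (Fin n)) :
    Contains π (1 : Equiv.Perm (Fin k)) ↔ ∃ S : Finset (Fin n), S.card = k ∧ IncrSeq π S := by
  constructor
  · rintro ⟨f, hf, hp⟩
    refine ⟨Finset.univ.image f, ?_, ?_⟩
    · rw [Finset.card_image_of_injective _ hf.injective, Finset.card_univ, Fintype.card_fin]
    · intro i hi j hj hij
      obtain ⟨a, -, rfl⟩ := Finset.mem_image.1 hi
      obtain ⟨b, -, rfl⟩ := Finset.mem_image.1 hj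
      have hab : a < b := by
        rcases lt_trichotomy a b with h | h | h
        · exact h
        · exact absurd (h ▸ hij) (lt_irrefl _)
        · exact absurd (hf h) (asymm hij)
      have := (hp a b).1 (by simpa using hab)
      exact this
  · rintro ⟨S, hcard, hS⟩
    have e := S.orderIsoOfFin hcard
    refine ⟨fun a => (e a : Fin n), fun a b hab => ?_, fun a b => ?_⟩
    · exact e.strictMono hab
    · simp only [Equiv.Perm.one_apply]
      constructor
      · intro hab
        exact hS _ (e a).2 _ (e b).2 (e.strictMono hab)
      · intro hπ
        rcases lt_trichotomy a b with h | h | h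
        · exact h
        · subst h; exact absurd hπ (lt_irrefl _)
        · exact absurd (hS _ (e b).2 _ (e a).2 (e.strictMono h)) (asymm hπ)

-- counting helpers
lemma card_filter_val_lt (t : Fin n) :
    (Finset.univ.filter fun s : Fin n => (s : ℕ) < (t : ℕ)).card = (t : ℕ) := by
  have : (Finset.univ.filter fun s : Fin n => (s : ℕ) < (t : ℕ)) = Finset.Iio t := by
    ext s
    simp only [Finset.mem_filter, Finset.mem_univ, true_and, Finset.mem_Iio, Fin.lt_def]
  rw [this, Fin.card_Iio]

lemma card_filter_perm (π : Equiv.Perm (Fin n)) (P : Fin n → Prop) [DecidablePred P] :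
    (Finset.univ.filter fun s => P (π s)).card = (Finset.univ.filter P).card := by
  have himg : (Finset.univ.filter fun s => P (π s)) = (Finset.univ.filter P).image π.symm := by
    ext x
    simp only [Finset.mem_filter, Finset.mem_univ, true_and, Finset.mem_image]
    constructor
    · intro hx; exact ⟨π x, hx, π.symm_apply_apply x⟩
    · rintro ⟨y, hy, rfl⟩; simpa using hy
  rw [himg, Finset.card_image_of_injective _ π.symm.injective]

lemma card_filter_pval_lt (π : Equiv.Perm (Fin n)) (t : Fin n) :
    (Finset.univ.filter fun s : Fin n => (π s : ℕ) < (π t : ℕ)).card = (π t : ℕ) :=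
  (card_filter_perm π (fun v => (v : ℕ) < (π t : ℕ))).trans (card_filter_val_lt (π t))

lemma card_filter_val_le {a : ℕ} (ha : a < n) :
    (Finset.univ.filter fun s : Fin n => (s : ℕ) ≤ a).card = a + 1 := by
  have : (Finset.univ.filter fun s : Fin n => (s : ℕ) ≤ a) = Finset.Iic (⟨a, ha⟩ : Fin n) := by
    ext s
    simp only [Finset.mem_filter, Finset.mem_univ, true_and, Finset.mem_Iic, Fin.le_def]
  rw [this, Fin.card_Iic]

-- generic: card of an interval-type filter of values in (lo, hi] when hi < n
lemma card_filter_val_ioc {lo hi : ℕ} (hhi : hi < n) :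
    (Finset.univ.filter fun s : Fin n => lo < (s : ℕ) ∧ (s : ℕ) ≤ hi).card = hi - lo := by
  rw [← Nat.card_Ioc lo hi]
  refine Finset.card_nbij (fun s => (s : ℕ)) ?_ ?_ ?_
  · intro s hs; simp only [Finset.mem_coe, Finset.mem_filter, Finset.mem_univ, true_and] at hs
    simp [Finset.mem_Ioc, hs.1, hs.2]
  · intro s _ t _ h; exact Fin.val_injective h
  · intro x hx
    simp only [Finset.coe_Ioc, Set.mem_Ioc] at hx
    refine ⟨⟨x, lt_of_le_of_lt hx.2 hhi⟩, ?_, rfl⟩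
    simp [hx.1, hx.2]

def Box (π : Equiv.Perm (Fin n)) (a b : ℕ) : Prop :=
  ∃ p : Fin n, (p : ℕ) ≤ a ∧ (π p : ℕ) ≤ b

def Corner (π : Equiv.Perm (Fin n)) (a b : ℕ) : Prop :=
  ∃ i l : Fin n, (i : ℕ) = a + 1 ∧ (π l : ℕ) = b + 1 ∧ (π l : ℕ) < (π i : ℕ) ∧ i < l

def Cov (π : Equiv.Perm (Fin n)) (a b : ℕ) : Prop := ¬ Box π a b ∨ Corner π a b

def Dominated (E : Set (Fin n × Fin n)) (a b : ℕ) : Prop :=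
  ∃ q ∈ E, a ≤ (q.1 : ℕ) ∧ b ≤ (q.2 : ℕ)

lemma mem_diagram {π : Equiv.Perm (Fin n)} {i j : Fin n} :
    (i, j) ∈ Diagram π ↔ j < π i ∧ i < π.symm j := Iff.rfl

lemma rank_eq_zero_iff {π : Equiv.Perm (Fin n)} {i j : Fin n} :
    rank π (i, j) = 0 ↔ ∀ p : Fin n, p < i → ¬ π p < j := by
  unfold rank
  rw [Finset.card_eq_zero, Finset.filter_eq_empty_iff]
  constructor
  · intro h p hp hpj; exact h (Finset.mem_univ p) ⟨hp, hpj⟩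
  · intro h p _ hc; exact h p hc.1 hc.2

lemma rank_le_one_of_noBad {π : Equiv.Perm (Fin n)} (hNB : NoBad π) {i j : Fin n}
    (hd : (i, j) ∈ Diagram π) : rank π (i, j) ≤ 1 := by
  by_contra hcon
  push_neg at hcon
  rw [show rank π (i,j) = (Finset.univ.filter fun k : Fin n => k < i ∧ π k < j).card from rfl,
    Finset.one_lt_card] at hcon
  obtain ⟨p, hp, q, hq, hne⟩ := hcon
  rw [Finset.mem_filter] at hp hq
  set l := π.symm j with hldef
  have hl : π l = j := π.apply_symm_apply j
  have hil : i < l := hd.2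
  rcases hne.lt_or_gt with hlt | hlt
  · exact hNB p q i l hlt hq.2.1 hil (by rw [hl]; exact hp.2.2) (by rw [hl]; exact hq.2.2)
      (by rw [hl]; exact hd.1)
  · exact hNB q p i l hlt hp.2.1 hil (by rw [hl]; exact hq.2.2) (by rw [hl]; exact hp.2.2)
      (by rw [hl]; exact hd.1)

lemma walk (π : Equiv.Perm (Fin n)) :
    ∀ (m : ℕ) (i j : Fin n), 2*n ≤ m + (i:ℕ) + (j:ℕ) → (i, j) ∈ Diagram π →
      ∃ p : Fin n × Fin n, p ∈ EssSet π ∧ i ≤ p.1 ∧ j ≤ p.2 := by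
  intro m
  induction m with
  | zero =>
    intro i j hm _
    exfalso; have := i.isLt; have := j.isLt; omega
  | succ m ih =>
    intro i j hm hd
    by_cases hA : ∀ i' : Fin n, (i' : ℕ) = (i : ℕ) + 1 → (i', j) ∉ Diagram π
    · by_cases hB : ∀ j' : Fin n, (j' : ℕ) = (j : ℕ) + 1 → (i, j') ∉ Diagram π
      · exact ⟨(i, j), ⟨hd, hA, hB⟩, le_refl _, le_refl _⟩
      · push_neg at hB
        obtain ⟨j', hj', hd'⟩ := hB
        obtain ⟨p, hp, h1, h2⟩ := ih i j' (by omega) hd'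
        exact ⟨p, hp, h1, le_trans (by rw [Fin.le_def]; omega) h2⟩
    · push_neg at hA
      obtain ⟨i', hi', hd'⟩ := hA
      obtain ⟨p, hp, h1, h2⟩ := ih i' j (by omega) hd'
      exact ⟨p, hp, le_trans (by rw [Fin.le_def]; omega) h1, h2⟩

lemma walk0 (π : Equiv.Perm (Fin n)) :
    ∀ (m : ℕ) (i j : Fin n), 2*n ≤ m + (i:ℕ) + (j:ℕ) → (i, j) ∈ Diagram π →
      (∀ p : Fin n, p < i → ¬ π p < j) →
      ∃ p : Fin n × Fin n, p ∈ EssSet π ∧ i ≤ p.1 ∧ j ≤ p.2 ∧ rank π p = 0 := by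
  intro m
  induction m with
  | zero =>
    intro i j hm _ _
    exfalso; have := i.isLt; have := j.isLt; omega
  | succ m ih =>
    intro i j hm hd hz
    by_cases hA : ∀ i' : Fin n, (i' : ℕ) = (i : ℕ) + 1 → (i', j) ∉ Diagram π
    · by_cases hB : ∀ j' : Fin n, (j' : ℕ) = (j : ℕ) + 1 → (i, j') ∉ Diagram π
      · exact ⟨(i, j), ⟨hd, hA, hB⟩, le_refl _, le_refl _, rank_eq_zero_iff.2 hz⟩
      · push_neg at hB
        obtain ⟨j', hj', hd'⟩ := hB
        have hz' : ∀ p : Fin n, p < i → ¬ π p < j' := by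
          intro p hp hc
          have h1 : (π p : ℕ) < (j : ℕ) + 1 := by
            have : (π p : ℕ) < (j' : ℕ) := hc
            omega
          have h2 : ¬ (π p : ℕ) < (j : ℕ) := fun hh => hz p hp hh
          have h3 : (π p : ℕ) = (j : ℕ) := by omega
          have h4 : π p = j := Fin.val_injective h3
          have h5 : π.symm j = p := by rw [← h4, Equiv.symm_apply_apply]
          have h6 : i < π.symm j := hd.2
          rw [h5] at h6
          exact absurd hp (asymm h6)
        obtain ⟨p, hp, h1, h2, h3⟩ := ih i j' (by omega) hd' hz'
        exact ⟨p, hp, h1, le_trans (by rw [Fin.le_def]; omega) h2, h3⟩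
    · push_neg at hA
      obtain ⟨i', hi', hd'⟩ := hA
      have hz' : ∀ p : Fin n, p < i' → ¬ π p < j := by
        intro p hp hc
        rcases Nat.lt_or_ge (p : ℕ) (i : ℕ) with hlt | hge
        · exact hz p hlt hc
        · have : (p : ℕ) = (i : ℕ) := by
            have : (p : ℕ) < (i' : ℕ) := hp
            omega
          have hpi : p = i := Fin.val_injective this
          rw [hpi] at hc
          exact absurd hc (asymm hd.1)
      obtain ⟨p, hp, h1, h2, h3⟩ := ih i' j (by omega) hd' hz'
      exact ⟨p, hp, le_trans (by rw [Fin.le_def]; omega) h1, h2, h3⟩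

lemma rank_one_exists {π : Equiv.Perm (Fin n)} {P : Fin n × Fin n} (h : rank π P = 1) :
    ∃ p₀ : Fin n, (p₀ < P.1 ∧ π p₀ < P.2) ∧ ∀ x : Fin n, x < P.1 → π x < P.2 → x = p₀ := by
  rw [show rank π P = (Finset.univ.filter fun k : Fin n => k < P.1 ∧ π k < P.2).card from rfl,
    Finset.card_eq_one] at h
  obtain ⟨p₀, hset⟩ := h
  have hmem : p₀ ∈ Finset.univ.filter fun k : Fin n => k < P.1 ∧ π k < P.2 := by
    rw [hset]; exact Finset.mem_singleton_self p₀
  rw [Finset.mem_filter] at hmem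
  refine ⟨p₀, hmem.2, fun x hx1 hx2 => ?_⟩
  have : x ∈ Finset.univ.filter fun k : Fin n => k < P.1 ∧ π k < P.2 :=
    Finset.mem_filter.2 ⟨Finset.mem_univ x, hx1, hx2⟩
  rw [hset, Finset.mem_singleton] at this
  exact this

/-- Main equivalence: domination by E* ⟺ Cov. -/
lemma covC {π : Equiv.Perm (Fin n)} (hNB : NoBad π) {a b : ℕ} (ha : a < n) (hb : b < n) :
    Dominated (Estar π) a b ↔ Cov π a b := by
  constructor
  · rintro ⟨q, hq, hqa, hqb⟩
    rcases hq with ⟨hess, hrk⟩ | ⟨P, hess, hrk, hc1, hc2⟩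
    · -- rank-0 essential cell dominating (a,b) : box empty
      left
      rintro ⟨p, hpa, hpb⟩
      obtain ⟨I, J⟩ := q
      have hz : ∀ x : Fin n, x < I → ¬ π x < J := rank_eq_zero_iff.1 hrk
      have hd1 : (J : ℕ) < (π I : ℕ) := hess.1.1
      have hd2 : (I : ℕ) < (π.symm J : ℕ) := hess.1.2
      have hqa' : a ≤ (I : ℕ) := hqa
      have hqb' : b ≤ (J : ℕ) := hqb
      rcases lt_trichotomy (p : ℕ) (I : ℕ) with hlt | heq | hgt
      · have h1 : ¬ π p < J := hz p hlt
        rw [Fin.lt_def] at h1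
        have h3 : (π p : ℕ) = (J : ℕ) := by omega
        have h4 : π p = J := Fin.val_injective h3
        have h5 : π.symm J = p := by rw [← h4, Equiv.symm_apply_apply]
        rw [h5] at hd2
        omega
      · have hpI : p = I := Fin.val_injective heq
        rw [hpI] at hpb
        omega
      · omega
    · -- rank-1 essential cell, q = P - (1,1)
      obtain ⟨I, J⟩ := P
      simp only at hc1 hc2
      have haI : a + 1 ≤ (I : ℕ) := by omega
      have hbJ : b + 1 ≤ (J : ℕ) := by omega
      have hd1 : (J : ℕ) < (π I : ℕ) := hess.1.1
      have hd2 : (I : ℕ) < (π.symm J : ℕ) := hess.1.2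
      by_cases hbox : Box π a b
      · right
        obtain ⟨e, hea, heb⟩ := hbox
        obtain ⟨p₀, hp₀, huniq⟩ := rank_one_exists hrk
        have huniq' : ∀ x : Fin n, (x : ℕ) < (I : ℕ) → (π x : ℕ) < (J : ℕ) → x = p₀ := by
          intro x h1 h2
          exact huniq x (by rwa [Fin.lt_def]) (by rwa [Fin.lt_def])
        have hep₀ : e = p₀ := huniq' e (by omega) (by omega)
        have hea' : (p₀ : ℕ) ≤ a := by rw [← hep₀]; exact hea
        have heb' : (π p₀ : ℕ) ≤ b := by rw [← hep₀]; exact heb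
        have hi₀lt : a + 1 < n := lt_of_le_of_lt haI I.isLt
        have hB1lt : b + 1 < n := lt_of_le_of_lt hbJ J.isLt
        set i₀ : Fin n := ⟨a + 1, hi₀lt⟩ with hi₀def
        set B1 : Fin n := ⟨b + 1, hB1lt⟩ with hB1def
        set l : Fin n := π.symm B1 with hldef
        have hlB1 : (π l : ℕ) = b + 1 := by rw [hldef, π.apply_symm_apply]
        have hi₀val : (i₀ : ℕ) = a + 1 := rfl
        have hB1val : (B1 : ℕ) = b + 1 := rfl
        -- claim 1 : b+1 < π i₀
        have claim1 : b + 1 < (π i₀ : ℕ) := by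
          rcases eq_or_lt_of_le haI with heq | hlt
          · have hI : i₀ = I := Fin.val_injective (by omega)
            rw [hI]; omega
          · have hni : ¬ (π i₀ : ℕ) < (J : ℕ) := by
              intro hcc
              have := huniq' i₀ (by omega) hcc
              have : (i₀ : ℕ) = (p₀ : ℕ) := by rw [this]
              omega
            rcases eq_or_lt_of_le (show b + 1 ≤ (π i₀ : ℕ) by omega) with heq2 | hlt2
            · exfalso
              have hJv : (π i₀ : ℕ) = (J : ℕ) := by omega
              have h4 : π i₀ = J := Fin.val_injective hJv
              have h5 : π.symm J = i₀ := by rw [← h4, Equiv.symm_apply_apply]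
              rw [h5] at hd2
              omega
            · exact hlt2
        -- claim 2 : i₀ < l
        have claim2 : (i₀ : ℕ) < (l : ℕ) := by
          rcases eq_or_lt_of_le hbJ with heq | hlt
          · have hB1J : B1 = J := Fin.val_injective (by omega)
            rw [hldef, hB1J]
            omega
          · rcases lt_trichotomy (l : ℕ) (I : ℕ) with hlI | hlI | hlI
            · exfalso
              have := huniq' l hlI (by omega)
              have : (l : ℕ) = (p₀ : ℕ) := by rw [this]
              have hπeq : (π l : ℕ) = (π p₀ : ℕ) := by
                rw [Fin.val_injective this]
              omega
            · exfalso
              have hIl : l = I := Fin.val_injective hlI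
              rw [hIl] at hlB1
              omega
            · omega
        exact ⟨i₀, l, rfl, hlB1, by omega, by rwa [Fin.lt_def]⟩
      · left; exact hbox
  · rintro (hnbox | hcor)
    · -- ¬Box : (a,b) is a rank-0 diagram cell ; walk0
      have hnb : ∀ p : Fin n, (p : ℕ) ≤ a → ¬ (π p : ℕ) ≤ b := fun p h1 h2 => hnbox ⟨p, h1, h2⟩
      set A : Fin n := ⟨a, ha⟩ with hAdef
      set B : Fin n := ⟨b, hb⟩ with hBdef
      have hAval : (A : ℕ) = a := rfl
      have hBval : (B : ℕ) = b := rfl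
      have hπA : b < (π A : ℕ) := by
        have := hnb A (by omega)
        omega
      have hsymmB : a < (π.symm B : ℕ) := by
        by_contra hcc
        push_neg at hcc
        have := hnb (π.symm B) hcc
        rw [π.apply_symm_apply] at this
        omega
      have hd : (A, B) ∈ Diagram π := by
        constructor
        · show B < π A
          rw [Fin.lt_def]; omega
        · show A < π.symm B
          rw [Fin.lt_def]; omega
      have hz : ∀ p : Fin n, p < A → ¬ π p < B := by
        intro p hp hc
        rw [Fin.lt_def] at hp hc
        have := hnb p (by omega)
        omega
      obtain ⟨⟨I, J⟩, hess, h1, h2, hrk⟩ := walk0 π (2*n) A B (by omega) hd hz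
      have h1' : (A : ℕ) ≤ (I : ℕ) := h1
      have h2' : (B : ℕ) ≤ (J : ℕ) := h2
      exact ⟨(I, J), Or.inl ⟨hess, hrk⟩, by omega, by omega⟩
    · -- Corner : walk from (a+1, b+1)
      obtain ⟨i, l, hi, hl, hlt, hil⟩ := hcor
      have hd : (i, π l) ∈ Diagram π := by
        constructor
        · show π l < π i
          rw [Fin.lt_def]; exact hlt
        · show i < π.symm (π l)
          rw [Equiv.symm_apply_apply]; exact hil
      obtain ⟨⟨I, J⟩, hess, h1, h2⟩ := walk π (2*n) i (π l) (by omega) hd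
      have h1' : (i : ℕ) ≤ (I : ℕ) := h1
      have h2' : (π l : ℕ) ≤ (J : ℕ) := h2
      have hrk1 := rank_le_one_of_noBad hNB hess.1
      rcases Nat.le_one_iff_eq_zero_or_eq_one.1 hrk1 with h0 | hone
      · exact ⟨(I, J), Or.inl ⟨hess, h0⟩, by omega, by omega⟩
      · have hI1 : (I : ℕ) - 1 < n := by omega
        have hJ1 : (J : ℕ) - 1 < n := by omega
        refine ⟨(⟨(I : ℕ) - 1, hI1⟩, ⟨(J : ℕ) - 1, hJ1⟩), Or.inr ⟨(I, J), hess, hone, ?_, ?_⟩,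
          ?_, ?_⟩ <;> simp only <;> omega
section LemI
variable {π : Equiv.Perm (Fin n)} {r : ℕ}

def Qs (π : Equiv.Perm (Fin n)) (t : Fin n) : Finset (Fin n) :=
  Finset.univ.filter fun s => (s : ℕ) < (t : ℕ) ∧ (π s : ℕ) < (π t : ℕ)

lemma mem_Qs {t s : Fin n} : s ∈ Qs π t ↔ (s : ℕ) < (t : ℕ) ∧ (π s : ℕ) < (π t : ℕ) := by
  simp [Qs]

lemma corner_of_stair (hC : ∀ a b : ℕ, a + b + 1 = r → Cov π a b)
    {e : Fin n} (hs : (e:ℕ) + (π e:ℕ) + 1 ≤ r) {a : ℕ}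
    (hea : (e:ℕ) ≤ a) (har : a + (π e:ℕ) + 1 ≤ r) : Corner π a (r - 1 - a) := by
  rcases hC a (r - 1 - a) (by omega) with hnb | hcor
  · exact absurd ⟨e, hea, by omega⟩ hnb
  · exact hcor

lemma stairP2pos (hC : ∀ a b : ℕ, a + b + 1 = r → Cov π a b)
    {e x : Fin n} (hs : (e:ℕ) + (π e:ℕ) + 1 ≤ r)
    (hex : (e:ℕ) < (x:ℕ)) (hxr : (x:ℕ) + (π e:ℕ) ≤ r) : r + 2 ≤ (x:ℕ) + (π x:ℕ) := by
  obtain ⟨i, l, hi, hl, hlt, hil⟩ :=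
    corner_of_stair hC hs (a := (x:ℕ) - 1) (by omega) (by omega)
  have hix : i = x := Fin.val_injective (by omega)
  rw [hix] at hlt
  omega

lemma stairP2val (hC : ∀ a b : ℕ, a + b + 1 = r → Cov π a b)
    {e u : Fin n} (hs : (e:ℕ) + (π e:ℕ) + 1 ≤ r)
    (heu : (π e:ℕ) < (u:ℕ)) (hur : (u:ℕ) + (e:ℕ) ≤ r) :
    r + 2 ≤ (u:ℕ) + (π.symm u:ℕ) := by
  obtain ⟨i, l, hi, hl, hlt, hil⟩ :=
    corner_of_stair hC hs (a := r - (u:ℕ)) (by omega) (by omega)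
  have hlu : π l = u := Fin.val_injective (by omega)
  have : π.symm u = l := by rw [← hlu, Equiv.symm_apply_apply]
  rw [this]
  rw [Fin.lt_def] at hil
  omega

lemma stairP1 (hNB : NoBad π) (hC : ∀ a b : ℕ, a + b + 1 = r → Cov π a b)
    {e e' : Fin n} (hs : (e:ℕ) + (π e:ℕ) + 1 ≤ r)
    (hs' : (e':ℕ) + (π e':ℕ) + 1 ≤ r) (hlt : (e:ℕ) < (e':ℕ)) : (π e':ℕ) < (π e:ℕ) := by
  by_contra hcc
  push_neg at hcc
  have hne : (π e:ℕ) ≠ (π e':ℕ) := fun h =>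
    absurd (π.injective (Fin.val_injective h)) (fun hh => by rw [hh] at hlt; omega)
  have hpe : (π e:ℕ) < (π e':ℕ) := by omega
  obtain ⟨i, l, hi, hl, hlt2, hil⟩ :=
    corner_of_stair hC hs (a := (e':ℕ)) (by omega) (by omega)
  exact hNB e e' i l (by rw [Fin.lt_def]; omega) (by rw [Fin.lt_def]; omega) hil
    (by rw [Fin.lt_def]; omega) (by rw [Fin.lt_def]; omega) hlt2

lemma stairP1' (hNB : NoBad π) (hC : ∀ a b : ℕ, a + b + 1 = r → Cov π a b)
    {e e' : Fin n} (hs : (e:ℕ) + (π e:ℕ) + 1 ≤ r)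
    (hs' : (e':ℕ) + (π e':ℕ) + 1 ≤ r) (hlt : (e:ℕ) < (e':ℕ)) :
    r + 1 ≤ (e':ℕ) + (π e:ℕ) := by
  by_contra hcc
  push_neg at hcc
  have := stairP2pos hC (e := e) (x := e') hs hlt (by omega)
  omega

lemma claimG (hNB : NoBad π) (hC : ∀ a b : ℕ, a + b + 1 = r → Cov π a b) :
    ∀ V : ℕ, ∀ t : Fin n, (π t : ℕ) = V → r ≤ (t:ℕ) + (π t:ℕ) →
    r + (Qs π t).card + min (Qs π t).card 1 ≤ (t:ℕ) + (π t:ℕ) := by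
  intro V
  induction V using Nat.strong_induction_on with
  | _ V ih =>
    intro t hV hns
    by_cases hQ : (Qs π t).card = 0
    · rw [hQ]; omega
    · have hQpos : 0 < (Qs π t).card := Nat.pos_of_ne_zero hQ
      obtain ⟨sm, hmem, hmax⟩ :=
        Finset.exists_max_image (Qs π t) (fun s => (π s : ℕ)) (Finset.card_pos.1 hQpos)
      rw [mem_Qs] at hmem
      have hsmt : (sm:ℕ) < (t:ℕ) := hmem.1
      have hsmv : (π sm:ℕ) < (π t:ℕ) := hmem.2
      have hmax' : ∀ s ∈ Qs π t, s ≠ sm → (π s:ℕ) < (π sm:ℕ) := by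
        intro s hsm hne
        have h1 := hmax s hsm
        have h2 : (π s:ℕ) ≠ (π sm:ℕ) := fun h => hne (π.injective (Fin.val_injective h))
        omega
      by_cases hstair : (sm:ℕ) + (π sm:ℕ) + 1 ≤ r
      · -- max Q-element is a staircase element
        have key : ∀ s ∈ Qs π t, s ≠ sm → r + 1 ≤ (s:ℕ) + (π sm:ℕ) := by
          intro s hsQ hne
          have hsv := hmax' s hsQ hne
          rw [mem_Qs] at hsQ
          by_cases hss : (s:ℕ) + (π s:ℕ) + 1 ≤ r
          · rcases lt_trichotomy (s:ℕ) (sm:ℕ) with h | h | h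
            · have := stairP1 hNB hC hss hstair h
              omega
            · exact absurd (Fin.val_injective h) hne
            · have := stairP1' hNB hC hstair hss h
              omega
          · omega
        by_cases hcase : (t:ℕ) + (π sm:ℕ) ≤ r
        · -- then Q = 1 and t+πt ≥ r+2
          have hQ1 : Qs π t = {sm} := by
            ext s
            rw [Finset.mem_singleton]
            constructor
            · intro hsQ
              by_contra hne
              have := key s hsQ hne
              rw [mem_Qs] at hsQ
              omega
            · intro h; rw [h, mem_Qs]
              exact ⟨hsmt, hsmv⟩
          have hP := stairP2pos hC (e := sm) (x := t) hstair hsmt hcase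
          rw [hQ1, Finset.card_singleton]
          omega
        · push_neg at hcase
          have hcarderase : ((Qs π t).erase sm).card ≤ (t:ℕ) - (r + 1 - (π sm:ℕ)) := by
            rw [← Nat.card_Ico (r + 1 - (π sm:ℕ)) (t:ℕ)]
            refine Finset.card_le_card_of_injOn Fin.val ?_ ?_
            · intro s hs
              have hne := Finset.ne_of_mem_erase hs
              have hsQ := Finset.mem_of_mem_erase hs
              have hk := key s hsQ hne
              rw [mem_Qs] at hsQ
              rw [Finset.mem_coe, Finset.mem_Ico]
              omega
            · intro s _ s' _ h; exact Fin.val_injective h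
          rw [Finset.card_erase_of_mem (mem_Qs.2 ⟨hsmt, hsmv⟩)] at hcarderase
          omega
      · -- max Q-element is NOT a staircase element : induction
        push_neg at hstair
        have hIH := ih (π sm : ℕ) (by omega) sm rfl (by omega)
        have hIH' : r + (Qs π sm).card ≤ (sm:ℕ) + (π sm:ℕ) := by omega
        set G := (Qs π t).filter (fun s : Fin n => (sm:ℕ) < (s:ℕ)) with hGdef
        have hsplit : Qs π t = insert sm ((Qs π sm) ∪ G) := by
          ext s
          simp only [Finset.mem_insert, Finset.mem_union, hGdef, Finset.mem_filter, mem_Qs]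
          constructor
          · rintro ⟨h1, h2⟩
            rcases lt_trichotomy (s:ℕ) (sm:ℕ) with h | h | h
            · have hne : s ≠ sm := fun hh => by rw [hh] at h; omega
              have := hmax' s (mem_Qs.2 ⟨h1, h2⟩) hne
              exact Or.inr (Or.inl ⟨h, this⟩)
            · exact Or.inl (Fin.val_injective h)
            · exact Or.inr (Or.inr ⟨⟨h1, h2⟩, h⟩)
          · rintro (rfl | ⟨h1, h2⟩ | ⟨⟨h1, h2⟩, _⟩)
            · exact ⟨hsmt, hsmv⟩
            · exact ⟨by omega, by omega⟩
            · exact ⟨h1, h2⟩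
        have hnotmem : sm ∉ (Qs π sm) ∪ G := by
          simp only [Finset.mem_union, hGdef, Finset.mem_filter, mem_Qs]
          rintro (⟨h, _⟩ | ⟨_, h⟩) <;> omega
        have hdisj : Disjoint (Qs π sm) G := by
          rw [Finset.disjoint_left]
          intro s hs1 hs2
          rw [mem_Qs] at hs1
          rw [hGdef, Finset.mem_filter] at hs2
          omega
        have hcardsplit : (Qs π t).card = 1 + (Qs π sm).card + G.card := by
          rw [hsplit, Finset.card_insert_of_notMem hnotmem, Finset.card_union_of_disjoint hdisj]
          omega
        have hg : G.card ≤ (t:ℕ) - ((sm:ℕ) + 1) := by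
          rw [← Nat.card_Ico ((sm:ℕ) + 1) (t:ℕ)]
          refine Finset.card_le_card_of_injOn Fin.val ?_ ?_
          · intro s hs
            rw [hGdef, Finset.mem_coe, Finset.mem_filter, mem_Qs] at hs
            rw [Finset.mem_coe, Finset.mem_Ico]
            omega
          · intro s _ s' _ h; exact Fin.val_injective h
        omega


lemma count_master (π : Equiv.Perm (Fin n)) (S : Finset (Fin n)) (hS : IncrSeq π S)
    (t : Fin n) (htS : t ∈ S) (hmin : ∀ s ∈ S, t ≤ s) :
    S.card + (t:ℕ) + ((π t:ℕ) - (Qs π t).card) ≤ n ∧ (Qs π t).card ≤ (π t:ℕ) := by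
  classical
  set A := Finset.univ.filter (fun s : Fin n => (s:ℕ) < (t:ℕ)) with hA
  set Bf := Finset.univ.filter (fun s : Fin n => (π s:ℕ) < (π t:ℕ)) with hBf
  have hQsub : Qs π t ⊆ Bf := by
    intro s hs; rw [mem_Qs] at hs
    rw [hBf, Finset.mem_filter]; exact ⟨Finset.mem_univ _, hs.2⟩
  have hcardA : A.card = (t:ℕ) := card_filter_val_lt t
  have hcardBf : Bf.card = (π t:ℕ) := card_filter_pval_lt π t
  have hQle : (Qs π t).card ≤ (π t:ℕ) := hcardBf ▸ Finset.card_le_card hQsub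
  set B := Bf \ Qs π t with hB
  have hcardB : B.card = (π t:ℕ) - (Qs π t).card := by
    rw [hB, Finset.card_sdiff_of_subset hQsub, hcardBf]
  have hdisjAB : Disjoint A B := by
    rw [Finset.disjoint_left]
    intro s hsA hsB
    rw [hA, Finset.mem_filter] at hsA
    rw [hB, Finset.mem_sdiff, hBf, Finset.mem_filter] at hsB
    exact hsB.2 (mem_Qs.2 ⟨hsA.2, hsB.1.2⟩)
  have hdisjSA : Disjoint S A := by
    rw [Finset.disjoint_left]
    intro s hsS hsA
    rw [hA, Finset.mem_filter] at hsA
    have := hmin s hsS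
    rw [Fin.le_def] at this
    omega
  have hdisjSB : Disjoint S B := by
    rw [Finset.disjoint_left]
    intro s hsS hsB
    rw [hB, Finset.mem_sdiff, hBf, Finset.mem_filter] at hsB
    have hts := hmin s hsS
    rcases eq_or_lt_of_le hts with rfl | hlt
    · omega
    · have := hS t htS s hsS hlt
      rw [Fin.lt_def] at this
      omega
  have hunion : (S ∪ (A ∪ B)).card = S.card + ((t:ℕ) + ((π t:ℕ) - (Qs π t).card)) := by
    rw [Finset.card_union_of_disjoint (by
      rw [Finset.disjoint_union_right]; exact ⟨hdisjSA, hdisjSB⟩),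
      Finset.card_union_of_disjoint hdisjAB, hcardA, hcardB]
  have hle : (S ∪ (A ∪ B)).card ≤ n := by
    have := Finset.card_le_univ (S ∪ (A ∪ B))
    rwa [Fintype.card_fin] at this
  omega

lemma lemI (π : Equiv.Perm (Fin n)) (hNB : NoBad π) (r : ℕ)
    (hC : ∀ a b : ℕ, a + b + 1 = r → Cov π a b)
    (S : Finset (Fin n)) (hS : IncrSeq π S) : S.card ≤ n - r := by
  classical
  have hSn : S.card ≤ n := by
    have := Finset.card_le_univ S
    rwa [Fintype.card_fin] at this
  rcases Nat.eq_zero_or_pos r with rfl | hr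
  · omega
  rcases Nat.eq_zero_or_pos n with rfl | hn
  · omega
  -- r < n
  have hrn : r < n := by
    rcases hC 0 (r - 1) (by omega) with hnb | hcor
    · by_contra hcc
      push_neg at hcc
      refine hnb ⟨⟨0, hn⟩, by simp, ?_⟩
      have := (π ⟨0, hn⟩).isLt
      omega
    · obtain ⟨i, l, hi, hl, _, _⟩ := hcor
      have := (π l).isLt
      omega
  suffices h : S.card + r ≤ n by omega
  rcases S.eq_empty_or_nonempty with rfl | hne
  · simp; omega
  set t := S.min' hne with ht
  have htS : t ∈ S := S.min'_mem hne
  have hmin : ∀ s ∈ S, t ≤ s := fun s hs => S.min'_le s hs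
  by_cases hst : (t:ℕ) + (π t:ℕ) + 1 ≤ r
  · -- first element is a staircase element
    have hQ0 : (Qs π t).card = 0 := by
      rw [Finset.card_eq_zero, Finset.eq_empty_iff_forall_notMem]
      intro s hs
      rw [mem_Qs] at hs
      obtain ⟨h1, h2⟩ := hs
      by_cases hss : (s:ℕ) + (π s:ℕ) + 1 ≤ r
      · have := stairP1 hNB hC hss hst h1
        omega
      · omega
    set S' := S.erase t with hS'
    have hcardS' : S'.card = S.card - 1 := Finset.card_erase_of_mem htS
    have hScard1 : 1 ≤ S.card := Finset.card_pos.2 hne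
    rcases S'.eq_empty_or_nonempty with hS'e | hS'ne
    · -- S = {t} : show 1 + r ≤ n by counting
      have hcard1 : S.card = 1 := by
        have := Finset.card_eq_zero.2 hS'e
        omega
      set A := Finset.univ.filter (fun s : Fin n => (s:ℕ) < (t:ℕ)) with hA
      set Bf := Finset.univ.filter (fun s : Fin n => (π s:ℕ) < (π t:ℕ)) with hBf
      set C := Finset.univ.filter
        (fun s : Fin n => (π t:ℕ) < (π s:ℕ) ∧ (π s:ℕ) + (t:ℕ) ≤ r) with hC2
      have hcardA : A.card = (t:ℕ) := card_filter_val_lt t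
      have hcardBf : Bf.card = (π t:ℕ) := card_filter_pval_lt π t
      have hcardC : C.card = (r - (t:ℕ)) - (π t:ℕ) := by
        rw [hC2]
        have heq : (Finset.univ.filter
            (fun s : Fin n => (π t:ℕ) < (π s:ℕ) ∧ (π s:ℕ) + (t:ℕ) ≤ r)) =
            (Finset.univ.filter
            (fun s : Fin n => (π t:ℕ) < (π s:ℕ) ∧ (π s:ℕ) ≤ r - (t:ℕ))) := by
          apply Finset.filter_congr
          intro s _
          constructor
          · rintro ⟨h1, h2⟩; exact ⟨h1, by omega⟩
          · rintro ⟨h1, h2⟩; refine ⟨h1, by omega⟩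
        rw [heq, card_filter_perm π (fun v : Fin n => (π t:ℕ) < (v:ℕ) ∧ (v:ℕ) ≤ r - (t:ℕ)),
          card_filter_val_ioc (by omega)]
      have hdisjAB : Disjoint A Bf := by
        rw [Finset.disjoint_left]
        intro s hsA hsB
        rw [hA, Finset.mem_filter] at hsA
        rw [hBf, Finset.mem_filter] at hsB
        have : s ∈ Qs π t := mem_Qs.2 ⟨hsA.2, hsB.2⟩
        rw [Finset.card_eq_zero] at hQ0
        rw [hQ0] at this
        exact absurd this (Finset.notMem_empty s)
      have hdisjAC : Disjoint A C := by
        rw [Finset.disjoint_left]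
        intro s hsA hsC
        rw [hA, Finset.mem_filter] at hsA
        rw [hC2, Finset.mem_filter] at hsC
        have hP := stairP2val hC (e := t) (u := π s) hst hsC.2.1 hsC.2.2
        rw [Equiv.symm_apply_apply] at hP
        omega
      have hdisjBC : Disjoint Bf C := by
        rw [Finset.disjoint_left]
        intro s hsB hsC
        rw [hBf, Finset.mem_filter] at hsB
        rw [hC2, Finset.mem_filter] at hsC
        omega
      have htnot : t ∉ A ∪ (Bf ∪ C) := by
        simp only [Finset.mem_union, hA, hBf, hC2, Finset.mem_filter, Finset.mem_univ, true_and]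
        omega
      have hcards : ({t} ∪ (A ∪ (Bf ∪ C))).card = 1 + ((t:ℕ) + ((π t:ℕ) + ((r - (t:ℕ)) - (π t:ℕ)))) := by
        rw [Finset.card_union_of_disjoint (by
            rw [Finset.disjoint_left]
            intro s hs1 hs2
            rw [Finset.mem_singleton] at hs1
            rw [hs1] at hs2
            exact htnot hs2),
          Finset.card_union_of_disjoint (by
            rw [Finset.disjoint_union_right]; exact ⟨hdisjAB, hdisjAC⟩),
          Finset.card_union_of_disjoint hdisjBC, Finset.card_singleton,
          hcardA, hcardBf, hcardC]
      have hle : ({t} ∪ (A ∪ (Bf ∪ C))).card ≤ n := by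
        have := Finset.card_le_univ ({t} ∪ (A ∪ (Bf ∪ C)))
        rwa [Fintype.card_fin] at this
      omega
    · -- second element t' of S
      set t' := S'.min' hS'ne with ht'
      have ht'S' : t' ∈ S' := S'.min'_mem hS'ne
      have ht'S : t' ∈ S := Finset.mem_of_mem_erase ht'S'
      have htt' : t < t' := by
        rcases eq_or_lt_of_le (hmin t' ht'S) with heq | hlt
        · exact absurd ht'S' (by rw [← heq]; exact Finset.notMem_erase t S)
        · exact hlt
      have hππ : π t < π t' := hS t htS t' ht'S htt'
      have hns' : r ≤ (t':ℕ) + (π t':ℕ) := by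
        by_contra hcc
        push_neg at hcc
        have := stairP1 hNB hC (e := t) (e' := t') hst (by omega)
          (by rw [Fin.lt_def] at htt'; omega)
        rw [Fin.lt_def] at hππ
        omega
      have hQ1 : t ∈ Qs π t' := mem_Qs.2 ⟨by rw [Fin.lt_def] at htt'; omega,
        by rw [Fin.lt_def] at hππ; omega⟩
      have hQpos : 1 ≤ (Qs π t').card := Finset.card_pos.2 ⟨t, hQ1⟩
      have hG := claimG hNB hC (π t' : ℕ) t' rfl hns'
      have hmin' : ∀ s ∈ S', t' ≤ s := fun s hs => S'.min'_le s hs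
      have hIncr' : IncrSeq π S' := incrSeq_subset (Finset.erase_subset t S) hS
      obtain ⟨hcm, hQle⟩ := count_master π S' hIncr' t' ht'S' hmin'
      omega
  · -- first element not staircase
    obtain ⟨hcm, hQle⟩ := count_master π S hS t htS hmin
    have hG := claimG hNB hC (π t : ℕ) t rfl (by omega)
    omega

end LemI
-- deletion gadget
def delP (π : Equiv.Perm (Fin (n+1))) (e : Fin (n+1)) : Equiv.Perm (Fin n) :=
  (((finSuccEquiv' e).symm.trans (π : Fin (n+1) ≃ Fin (n+1))).trans (finSuccEquiv' (π e))).removeNone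

lemma delP_spec (π : Equiv.Perm (Fin (n+1))) (e : Fin (n+1)) (a : Fin n) :
    π (e.succAbove a) = (π e).succAbove (delP π e a) := by
  set E := (((finSuccEquiv' e).symm.trans (π : Fin (n+1) ≃ Fin (n+1))).trans
    (finSuccEquiv' (π e))) with hE
  have h1 : E (some a) = finSuccEquiv' (π e) (π (e.succAbove a)) := by
    simp [hE, finSuccEquiv'_symm_some]
  have hne : π (e.succAbove a) ≠ π e := fun h => Fin.succAbove_ne e a (π.injective h)
  obtain ⟨b, hb⟩ := Fin.exists_succAbove_eq hne
  have h2 : E (some a) = some b := by rw [h1, ← hb, finSuccEquiv'_succAbove]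
  have h3 : some (E.removeNone a) = E (some a) := Equiv.removeNone_some E ⟨b, h2⟩
  rw [h2] at h3
  have h4 : E.removeNone a = b := Option.some_injective _ h3
  show π (e.succAbove a) = (π e).succAbove (E.removeNone a)
  rw [h4]
  exact hb.symm

lemma succAbove_val_lt {p : Fin (n+1)} {i : Fin n} (h : (i:ℕ) < (p:ℕ)) :
    ((p.succAbove i) : ℕ) = (i : ℕ) := by
  rw [Fin.succAbove_of_castSucc_lt p i (by rw [Fin.lt_def]; simpa)]
  simp

lemma succAbove_val_ge {p : Fin (n+1)} {i : Fin n} (h : (p:ℕ) ≤ (i:ℕ)) :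
    ((p.succAbove i) : ℕ) = (i : ℕ) + 1 := by
  rw [Fin.succAbove_of_le_castSucc p i (by rw [Fin.le_def]; simpa)]
  simp

lemma succAbove_bound {e : Fin (n+1)} {x : Fin n} {a : ℕ}
    (hea : (e:ℕ) ≤ a) (hx : ((e.succAbove x) : ℕ) ≤ a) : (x:ℕ) + 1 ≤ a := by
  rcases Nat.lt_or_ge (x:ℕ) (e:ℕ) with h | h
  · rw [succAbove_val_lt h] at hx; omega
  · rw [succAbove_val_ge h] at hx; omega

lemma noBad_delP {π : Equiv.Perm (Fin (n+1))} {e : Fin (n+1)} (h : NoBad π) :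
    NoBad (delP π e) := by
  intro p q i l h1 h2 h3 h4 h5 h6
  have sm := Fin.strictMono_succAbove e
  refine h (e.succAbove p) (e.succAbove q) (e.succAbove i) (e.succAbove l)
    (sm h1) (sm h2) (sm h3) ?_ ?_ ?_ <;>
    rw [delP_spec, delP_spec] <;> exact Fin.succAbove_lt_succAbove_iff.2 (by assumption)

lemma contains_delP {k : ℕ} {τ : Equiv.Perm (Fin k)} {π : Equiv.Perm (Fin (n+1))}
    {e : Fin (n+1)} (h : Contains (delP π e) τ) : Contains π τ := by
  obtain ⟨f, hf, hp⟩ := h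
  refine ⟨fun x => e.succAbove (f x), (Fin.strictMono_succAbove e).comp hf, fun a b => ?_⟩
  rw [delP_spec, delP_spec, Fin.succAbove_lt_succAbove_iff]
  exact hp a b

/-- Lemma II : failing cell gives a long increasing sequence. -/
lemma lemII : ∀ (n : ℕ) (π : Equiv.Perm (Fin n)), NoBad π → ∀ a b : ℕ, a + b < n →
    Box π a b → ¬ Corner π a b →
    ∃ S : Finset (Fin n), IncrSeq π S ∧ n ≤ a + b + S.card := by
  intro n
  induction n with
  | zero => intro π _ a b hab; omega
  | succ m ih =>
    intro π hNB a b hab hbox hcor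
    classical
    set boxF := Finset.univ.filter (fun s : Fin (m+1) => (s:ℕ) ≤ a ∧ (π s:ℕ) ≤ b) with hboxF
    have hboxne : boxF.Nonempty := by
      obtain ⟨p, h1, h2⟩ := hbox
      exact ⟨p, by rw [hboxF, Finset.mem_filter]; exact ⟨Finset.mem_univ _, h1, h2⟩⟩
    by_cases h2c : 2 ≤ boxF.card
    · -- at least two box elements : delete one, recurse
      obtain ⟨e, he, e', he', hne⟩ := Finset.one_lt_card.1 h2c
      rw [hboxF, Finset.mem_filter] at he he'
      obtain ⟨-, hea, heb⟩ := he
      obtain ⟨-, hea', heb'⟩ := he'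
      have hvalne : (e:ℕ) ≠ (e':ℕ) := fun h => hne (Fin.val_injective h)
      have hπne : (π e:ℕ) ≠ (π e':ℕ) :=
        fun h => hne (π.injective (Fin.val_injective h))
      have ha1 : 1 ≤ a := by omega
      have hb1 : 1 ≤ b := by omega
      have hNB' : NoBad (delP π e) := noBad_delP hNB
      -- box for π'
      obtain ⟨a'', ha''⟩ := Fin.exists_succAbove_eq (show e' ≠ e from fun h => hne h.symm)
      have hval : π (e.succAbove a'') = (π e).succAbove ((delP π e) a'') := delP_spec π e a''
      rw [ha''] at hval
      have hbox' : Box (delP π e) (a-1) (b-1) := by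
        refine ⟨a'', ?_, ?_⟩
        · have := succAbove_bound hea (by rw [ha'']; exact hea')
          omega
        · have := succAbove_bound (x := (delP π e) a'') heb (by rw [← hval]; exact heb')
          omega
      have hcor' : ¬ Corner (delP π e) (a-1) (b-1) := by
        rintro ⟨i', l', hi', hl', hlt', hil'⟩
        apply hcor
        refine ⟨e.succAbove i', e.succAbove l', ?_, ?_, ?_, ?_⟩
        · rw [succAbove_val_ge (p := e) (i := i') (by omega)]; omega
        · rw [delP_spec, succAbove_val_ge (p := π e) (i := (delP π e) l') (by omega)]; omega
        · rw [delP_spec, delP_spec]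
          exact Fin.succAbove_lt_succAbove_iff.2 (by rw [Fin.lt_def]; exact hlt')
        · exact Fin.succAbove_lt_succAbove_iff.2 hil'
      obtain ⟨S', hS', hcard'⟩ := ih (delP π e) hNB' (a-1) (b-1) (by omega) hbox' hcor'
      refine ⟨S'.image (e.succAbove), ?_, ?_⟩
      · intro i hi j hj hij
        obtain ⟨x, hx, rfl⟩ := Finset.mem_image.1 hi
        obtain ⟨y, hy, rfl⟩ := Finset.mem_image.1 hj
        have hxy : x < y := Fin.succAbove_lt_succAbove_iff.1 hij
        rw [delP_spec, delP_spec]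
        exact Fin.succAbove_lt_succAbove_iff.2 (hS' x hx y hy hxy)
      · rw [Finset.card_image_of_injective _ (Fin.succAbove_right_injective)]
        omega
    · -- exactly one box element
      have hcard1 : boxF.card = 1 := by
        have := Finset.card_pos.2 hboxne
        omega
      obtain ⟨e, heset⟩ := Finset.card_eq_one.1 hcard1
      have hemem : e ∈ boxF := by rw [heset]; exact Finset.mem_singleton_self e
      rw [hboxF, Finset.mem_filter] at hemem
      have hea : (e:ℕ) ≤ a := hemem.2.1
      have heb : (π e:ℕ) ≤ b := hemem.2.2
      have huniq : ∀ s : Fin (m+1), (s:ℕ) ≤ a → (π s:ℕ) ≤ b → s = e := by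
        intro s h1 h2
        have : s ∈ boxF := by rw [hboxF, Finset.mem_filter]; exact ⟨Finset.mem_univ _, h1, h2⟩
        rw [heset, Finset.mem_singleton] at this
        exact this
      set R := Finset.univ.filter (fun s : Fin (m+1) => a < (s:ℕ) ∧ b < (π s:ℕ)) with hR
      have heR : e ∉ R := by
        rw [hR, Finset.mem_filter]
        rintro ⟨_, h, _⟩
        omega
      -- cardinality of R
      have han : a < m + 1 := by omega
      have hbn : b < m + 1 := by omega
      have hcardR : R.card = m - a - b := by
        set X := Finset.univ.filter (fun s : Fin (m+1) => (s:ℕ) ≤ a) with hX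
        set Y := Finset.univ.filter (fun s : Fin (m+1) => (π s:ℕ) ≤ b) with hY
        have hcX : X.card = a + 1 := card_filter_val_le han
        have hcY : Y.card = b + 1 := by
          rw [hY, card_filter_perm π (fun v : Fin (m+1) => (v:ℕ) ≤ b), card_filter_val_le hbn]
        have hXY : X ∩ Y = boxF := by
          rw [hX, hY, hboxF, ← Finset.filter_and]
        have hXuY : (X ∪ Y).card = a + b + 1 := by
          have := Finset.card_union_add_card_inter X Y
          rw [hXY, hcard1, hcX, hcY] at this
          omega
        have hRcompl : R = Finset.univ \ (X ∪ Y) := by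
          ext s
          simp only [hR, hX, hY, Finset.mem_filter, Finset.mem_sdiff, Finset.mem_union,
            Finset.mem_univ, true_and]
          omega
        rw [hRcompl, Finset.card_sdiff_of_subset (Finset.subset_univ _), hXuY, Finset.card_univ,
          Fintype.card_fin]
        omega
      refine ⟨insert e R, ?_, ?_⟩
      · -- increasing
        intro i hi j hj hij
        rw [Finset.mem_insert] at hi hj
        rcases hi with rfl | hiR
        · rcases hj with rfl | hjR
          · exact absurd hij (lt_irrefl _)
          · rw [hR, Finset.mem_filter] at hjR
            rw [Fin.lt_def]; omega
        · rcases hj with rfl | hjR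
          · rw [hR, Finset.mem_filter] at hiR
            rw [Fin.lt_def] at hij
            omega
          · -- both in R : no inversion allowed
            rw [hR, Finset.mem_filter] at hiR hjR
            obtain ⟨-, hia, hib⟩ := hiR
            obtain ⟨-, hja, hjb⟩ := hjR
            by_contra hc
            have hπij : (π j:ℕ) < (π i:ℕ) := by
              have hne : (π i:ℕ) ≠ (π j:ℕ) := fun h =>
                (ne_of_lt hij) (π.injective (Fin.val_injective h))
              rw [Fin.lt_def] at hc
              omega
            have hijv : (i:ℕ) < (j:ℕ) := hij
            have han2 : a + 1 < m + 1 := by omega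
            have hbn2 : b + 1 < m + 1 := by omega
            set i₀ : Fin (m+1) := ⟨a+1, han2⟩ with hi₀
            set B1 : Fin (m+1) := ⟨b+1, hbn2⟩ with hB1
            set l₀ := π.symm B1 with hl₀
            have hi₀v : (i₀:ℕ) = a + 1 := rfl
            have hB1v : (B1:ℕ) = b + 1 := rfl
            have hπl₀ : (π l₀:ℕ) = b + 1 := by rw [hl₀, π.apply_symm_apply]
            have hdis : ¬ (b + 1 < (π i₀:ℕ) ∧ (i₀:ℕ) < (l₀:ℕ)) := by
              rintro ⟨hh1, hh2⟩
              exact hcor ⟨i₀, l₀, rfl, hπl₀, by omega, by rw [Fin.lt_def]; exact hh2⟩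
            -- facts about i and j
            have hπjb : b + 1 ≤ (π j:ℕ) := hjb
            have hπib : b + 2 ≤ (π i:ℕ) := by omega
            rcases Nat.lt_or_ge (b+1) ((π i₀ : Fin (m+1)):ℕ) with hcaseA | hcaseA
            · -- then l₀ ≤ a+1
              have hl₀a : (l₀:ℕ) ≤ a + 1 := by
                by_contra hcc
                exact hdis ⟨hcaseA, by omega⟩
              have hl₀e : l₀ ≠ e := fun h => by rw [h] at hπl₀; omega
              have hjl₀ : j ≠ l₀ := fun h => by
                rw [h] at hja; omega
              have hπjb2 : b + 2 ≤ (π j:ℕ) := by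
                rcases Nat.lt_or_ge (b+1) (π j:ℕ) with hgt | hle
                · omega
                · exfalso
                  have hv : (π j:ℕ) = b + 1 := by omega
                  have hπjB : π j = B1 := Fin.val_injective (by rw [hv, hB1v])
                  have : j = l₀ := by rw [hl₀, ← hπjB, Equiv.symm_apply_apply]
                  exact hjl₀ this
              have hil₀ : i ≠ l₀ := fun h => by rw [h] at hib hπij; omega
              rcases Nat.lt_or_ge ((l₀:ℕ)) (a+1) with hsub | hsub
              · -- l₀ at position ≤ a : two small elements e, l₀
                have hel₀ : (e:ℕ) ≠ (l₀:ℕ) := fun h => hl₀e (Fin.val_injective h).symm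
                have hl₀i : (l₀:ℕ) < (i:ℕ) := by omega
                have hei : (e:ℕ) < (i:ℕ) := by omega
                rcases Nat.lt_or_ge (e:ℕ) (l₀:ℕ) with ho | ho
                · exact hNB e l₀ i j (by rw [Fin.lt_def]; omega) (by rw [Fin.lt_def]; omega)
                    (by rw [Fin.lt_def]; omega) (by rw [Fin.lt_def]; omega)
                    (by rw [Fin.lt_def]; omega) (by rw [Fin.lt_def]; omega)
                · have ho' : (l₀:ℕ) < (e:ℕ) := by omega
                  exact hNB l₀ e i j (by rw [Fin.lt_def]; omega) (by rw [Fin.lt_def]; omega)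
                    (by rw [Fin.lt_def]; omega) (by rw [Fin.lt_def]; omega)
                    (by rw [Fin.lt_def]; omega) (by rw [Fin.lt_def]; omega)
              · -- l₀ = a+1
                have hl₀val : (l₀:ℕ) = a + 1 := by omega
                have hii : a + 2 ≤ (i:ℕ) := by
                  have : i ≠ l₀ := hil₀
                  have : (i:ℕ) ≠ (l₀:ℕ) := fun h => hil₀ (Fin.val_injective h)
                  omega
                exact hNB e l₀ i j (by rw [Fin.lt_def]; omega) (by rw [Fin.lt_def]; omega)
                  (by rw [Fin.lt_def]; omega) (by rw [Fin.lt_def]; omega)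
                  (by rw [Fin.lt_def]; omega) (by rw [Fin.lt_def]; omega)
            · -- π i₀ ≤ b+1 : element at position a+1 with small value
              have hii₀ : i ≠ i₀ := fun h => by
                rw [h] at hπij hib
                omega
              have hii : a + 2 ≤ (i:ℕ) := by
                have : (i:ℕ) ≠ a + 1 := fun h => hii₀ (Fin.val_injective (by rw [h]))
                omega
              have hji₀ : j ≠ i₀ := fun h => by
                have : (j:ℕ) = a + 1 := by rw [h]
                omega
              have hπji₀ : (π j:ℕ) ≠ (π i₀:ℕ) := fun h =>
                hji₀ (π.injective (Fin.val_injective h))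
              have hei₀ : (e:ℕ) < a + 1 := by omega
              exact hNB e i₀ i j (by rw [Fin.lt_def]; exact hei₀) (by rw [Fin.lt_def]; omega)
                (by rw [Fin.lt_def]; omega) (by rw [Fin.lt_def]; omega)
                (by rw [Fin.lt_def]; omega) (by rw [Fin.lt_def]; omega)
      · rw [Finset.card_insert_of_notMem heR, hcardR]
        omega


-- the σ-side : 132-avoiding permutations have rank-0 essential sets
lemma rank_eq_zero_of_noBad1 {σ : Equiv.Perm (Fin n)} (h : NoBad1 σ) {i j : Fin n}
    (hd : (i, j) ∈ Diagram σ) : rank σ (i, j) = 0 := by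
  rw [rank_eq_zero_iff]
  intro p hp hc
  set l := σ.symm j with hl
  have hlj : σ l = j := σ.apply_symm_apply j
  exact h p i l hp hd.2 (by rw [hlj]; exact hc) (by rw [hlj]; exact hd.1)

lemma estar_eq_essSet {σ : Equiv.Perm (Fin n)} (h : NoBad1 σ) : Estar σ = EssSet σ := by
  ext x
  constructor
  · rintro (⟨hx, -⟩ | ⟨P, hP, hrk, -, -⟩)
    · exact hx
    · exfalso
      obtain ⟨P1, P2⟩ := P
      have := rank_eq_zero_of_noBad1 h hP.1
      omega
  · intro hx
    left
    obtain ⟨x1, x2⟩ := x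
    exact ⟨hx, rank_eq_zero_of_noBad1 h hx.1⟩

lemma avoids_iff (π : Equiv.Perm (Fin n)) (hNB : NoBad π) (k : ℕ) (hk : 1 ≤ k) :
    Avoids π (1 : Equiv.Perm (Fin k)) ↔
      (n < k ∨ ∀ a b : ℕ, a + b + 1 = n + 1 - k → Dominated (Estar π) a b) := by
  constructor
  · intro hav
    by_cases hkn : n < k
    · exact Or.inl hkn
    · push_neg at hkn
      right
      intro a b hab
      by_contra hdom
      have ha : a < n := by omega
      have hb : b < n := by omega
      have hncov : ¬ Cov π a b := fun hc => hdom ((covC hNB ha hb).2 hc)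
      have hbox : Box π a b := by
        by_contra hb2; exact hncov (Or.inl hb2)
      have hcor : ¬ Corner π a b := fun hc => hncov (Or.inr hc)
      obtain ⟨S, hS, hcard⟩ := lemII n π hNB a b (by omega) hbox hcor
      obtain ⟨T, hTsub, hTcard⟩ := Finset.exists_subset_card_eq (s := S) (n := k) (by omega)
      exact hav ((contains_one_iff π).2 ⟨T, hTcard, incrSeq_subset hTsub hS⟩)
  · intro h hcont
    rcases h with hkn | hdom
    · obtain ⟨f, hf, -⟩ := hcont
      have := Fintype.card_le_of_injective f hf.injective
      rw [Fintype.card_fin, Fintype.card_fin] at this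
      omega
    · obtain ⟨S, hcard, hS⟩ := (contains_one_iff π).1 hcont
      have hC : ∀ a b : ℕ, a + b + 1 = n + 1 - k → Cov π a b := by
        intro a b hab
        exact (covC hNB (by omega) (by omega)).1 (hdom a b hab)
      have := lemI π hNB (n + 1 - k) hC S hS
      omega

end SP

/-- Let `π` be a Schröder permutation and `σ` a 132-avoiding permutation with
`E(σ) = E*(π)`. Then for any `k ≥ 1`, `π` avoids the increasing pattern `12⋯k`
(the identity of `Fin k`) iff `σ` does. -/
theorem avoids_increasing_iff (n : ℕ) (π σ : Equiv.Perm (Fin n)) (hπ : Schroeder π)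
    (hσ : Avoids σ pat132) (hE : EssSet σ = Estar π) (k : ℕ) (hk : 1 ≤ k) :
    Avoids π (1 : Equiv.Perm (Fin k)) ↔ Avoids σ (1 : Equiv.Perm (Fin k)) := by
  have hNBπ : SP.NoBad π := SP.noBad_of_schroeder hπ
  have hNBσ : SP.NoBad σ := SP.noBad_of_schroeder (SP.schroeder_of_avoid132 hσ)
  have hEσ : Estar σ = EssSet σ := SP.estar_eq_essSet (SP.noBad1_of_avoid132 hσ)
  rw [SP.avoids_iff π hNBπ k hk, SP.avoids_iff σ hNBσ k hk, hEσ, hE]
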